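/- Every cycle in the weighted graph G_{x,y} whose total edge weight equals 2k³ contains exactly two edges of InputEdges. -/

import Mathlib

namespace WeightedCycle

/-- The vertices of the weighted cycle-detection graph: the sets `A₁, A₂, B₁, B₂`
of size `k` and the four center nodes `c_{A₁}, c_{A₂}, c_{B₁}, c_{B₂}`. -/
inductive WV (k : ℕ) : Type
  | a1 : Fin k → WV k
  | a2 : Fin k → WV k
  | b1 : Fin k → WV k
  | b2 : Fin k → WV k
  | cA1 : WV k
  | cA2 : WV k
  | cB1 : WV k
  | cB2 : WV k

open WV

/-- The weighted graph `G_{x,y}` (its underlying simple graph): each `c_S` is adjacent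
to every node of `S`, the edges `{c_{A₁}, c_{B₁}}` and `{c_{A₂}, c_{B₂}}` are present,
and for each pair `(i,j)`, `{a₁^i, a₂^j}` is an edge iff `x_{i,j} = 1` and
`{b₁^i, b₂^j}` is an edge iff `y_{i,j} = 1`. -/
def WG (k : ℕ) (x y : Fin k → Fin k → Bool) : SimpleGraph (WV k) :=
  SimpleGraph.fromEdgeSet
    ({e | ∃ i : Fin k,
        e = s(cA1, a1 i) ∨ e = s(cA2, a2 i) ∨ e = s(cB1, b1 i) ∨ e = s(cB2, b2 i)} ∪
     {s(cA1, cB1), s(cA2, cB2)} ∪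
     {e | ∃ i j : Fin k,
        (x i j = true ∧ e = s(a1 i, a2 j)) ∨ (y i j = true ∧ e = s(b1 i, b2 j))})

/-- The edge weights: the edge `{a₁^i, a₂^j}` has weight `k³ + k·i + j`, the edge
`{b₁^i, b₂^j}` has weight `k³ − (k·i + j)`, and all other edges have weight `0`. -/
def wt (k : ℕ) : WV k → WV k → ℕ
  | a1 i, a2 j => k ^ 3 + k * i.val + j.val
  | a2 j, a1 i => k ^ 3 + k * i.val + j.val
  | b1 i, b2 j => k ^ 3 - (k * i.val + j.val)
  | b2 j, b1 i => k ^ 3 - (k * i.val + j.val)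
  | _, _ => 0

/-- Whether a (directed) pair of vertices is an edge of `InputEdges`, i.e. has one
endpoint in `A₁` and the other in `A₂`, or one in `B₁` and the other in `B₂`. -/
def isInput {k : ℕ} : WV k → WV k → Bool
  | a1 _, a2 _ => true
  | a2 _, a1 _ => true
  | b1 _, b2 _ => true
  | b2 _, b1 _ => true
  | _, _ => false

/-- The total weight of a walk: the sum of the weights of its edges. -/
def walkWeight {k : ℕ} {x y : Fin k → Fin k → Bool} {u v : WV k}
    (p : (WG k x y).Walk u v) : ℕ :=
  (p.darts.map (fun d => wt k d.toProd.1 d.toProd.2)).sum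

/-- The number of edges of a walk belonging to `InputEdges`. -/
def inputCount {k : ℕ} {x y : Fin k → Fin k → Bool} {u v : WV k}
    (p : (WG k x y).Walk u v) : ℕ :=
  (p.darts.filter (fun d => isInput d.toProd.1 d.toProd.2)).length


/-- General list lemma: if every element either satisfies `P` and has `f`-value in
`[lo, hi]`, or fails `P` and has `f`-value `0`, then the sum of `f` over the list
is bounded by the filtered length times `lo` and `hi`. -/
lemma sum_bounds {α : Type*} (f : α → ℕ) (P : α → Bool) (lo hi : ℕ) :
    ∀ l : List α, (∀ a ∈ l, if P a then lo ≤ f a ∧ f a ≤ hi else f a = 0) →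
      (l.filter P).length * lo ≤ (l.map f).sum ∧
      (l.map f).sum ≤ (l.filter P).length * hi := by
  intro l h
  induction l with
  | nil => simp
  | cons a l ih =>
    have ha := h a List.mem_cons_self
    have ih' := ih (fun b hb => h b (List.mem_cons_of_mem a hb))
    by_cases hPa : P a = true
    · rw [if_pos hPa] at ha
      simp only [List.filter_cons, hPa, if_true, List.length_cons, List.map_cons,
        List.sum_cons, Nat.succ_mul]
      omega
    · rw [if_neg hPa] at ha
      simp only [List.filter_cons, hPa, Bool.false_eq_true, if_false, List.map_cons, List.sum_cons]
      omega

lemma wt_bounds {k : ℕ} (hk : 3 ≤ k) (u v : WV k) :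
    if isInput u v then
      k ^ 3 - (k ^ 2 - 1) ≤ wt k u v ∧ wt k u v ≤ k ^ 3 + k ^ 2 - 1
    else wt k u v = 0 := by
  have hkk : k * k = k ^ 2 := by ring
  have hk2 : 9 ≤ k ^ 2 := by nlinarith
  have hk3 : 3 * k ^ 2 ≤ k ^ 3 := by nlinarith
  have key : ∀ i j : Fin k, k * i.val + j.val + 1 ≤ k ^ 2 := by
    intro i j
    have h1 : k * (i.val + 1) ≤ k * k := Nat.mul_le_mul_left k i.isLt
    have h2 : k * (i.val + 1) = k * i.val + k := by ring
    have := j.isLt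
    omega
  have hA : ∀ i j : Fin k,
      k ^ 3 - (k ^ 2 - 1) ≤ k ^ 3 + k * i.val + j.val ∧
      k ^ 3 + k * i.val + j.val ≤ k ^ 3 + k ^ 2 - 1 := by
    intro i j; have := key i j; omega
  have hB : ∀ i j : Fin k,
      k ^ 3 - (k ^ 2 - 1) ≤ k ^ 3 - (k * i.val + j.val) ∧
      k ^ 3 - (k * i.val + j.val) ≤ k ^ 3 + k ^ 2 - 1 := by
    intro i j; have := key i j; omega
  cases u <;> cases v <;>
    first
      | rfl
      | (rename_i i j
         first
           | exact hA i j
           | exact hA j i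
           | exact hB i j
           | exact hB j i)

/-- Every cycle in `G_{x,y}` of total weight `2k³` contains exactly two edges of
`InputEdges`. -/
theorem cycle_weight_two_input_edges (k : ℕ) (hk : 3 ≤ k)
    (x y : Fin k → Fin k → Bool) (v : WV k) (p : (WG k x y).Walk v v)
    (hcyc : p.IsCycle) (hw : walkWeight p = 2 * k ^ 3) :
    inputCount p = 2 := by
  have hkk : k * k = k ^ 2 := by ring
  have hk2 : 9 ≤ k ^ 2 := by nlinarith
  have hk3 : 3 * k ^ 2 ≤ k ^ 3 := by nlinarith
  obtain ⟨h1, h2⟩ := sum_bounds (fun d => wt k d.toProd.1 d.toProd.2)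
    (fun d => isInput d.toProd.1 d.toProd.2) (k ^ 3 - (k ^ 2 - 1)) (k ^ 3 + k ^ 2 - 1)
    p.darts (fun d _ => wt_bounds hk d.toProd.1 d.toProd.2)
  rw [show (p.darts.map (fun d => wt k d.toProd.1 d.toProd.2)).sum = walkWeight p from rfl,
    hw] at h1 h2
  set n := inputCount p with hn
  rw [show (p.darts.filter (fun d => isInput d.toProd.1 d.toProd.2)).length = n from rfl]
    at h1 h2
  have hle : n ≤ 2 := by
    by_contra hc
    have h3 : 3 * (k ^ 3 - (k ^ 2 - 1)) ≤ n * (k ^ 3 - (k ^ 2 - 1)) :=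
      Nat.mul_le_mul_right _ (by omega)
    omega
  have hge : 2 ≤ n := by
    by_contra hc
    have h4 : n * (k ^ 3 + k ^ 2 - 1) ≤ 1 * (k ^ 3 + k ^ 2 - 1) :=
      Nat.mul_le_mul_right _ (by omega)
    omega
  omega


end WeightedCycle
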